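/- For a free tree T on n vertices rooted at a vertex r, the ratio of the number of planar arrangements of T to the number of projective arrangements of T^r equals n / (deg(r) + 1); in particular the number of planar arrangements is at least the number of projective arrangements, with equality if and only if T is a star and r is its hub. -/

import Mathlib

open Finset

attribute [local instance] Classical.propDecidable

/-- An arrangement `π` of the vertices of `G` is planar if no two edges cross. -/
def IsPlanarArr {n : ℕ} (G : SimpleGraph (Fin n)) (π : Equiv.Perm (Fin n)) : Prop :=
  ∀ s t u v : Fin n, G.Adj s t → G.Adj u v →
    ¬ (π s < π u ∧ π u < π t ∧ π t < π v)

/-- An arrangement of `G` rooted at `r` is projective if it is planar and no edge covers `r`. -/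
def IsProjectiveArr {n : ℕ} (G : SimpleGraph (Fin n)) (r : Fin n) (π : Equiv.Perm (Fin n)) : Prop :=
  IsPlanarArr G π ∧ ∀ s t : Fin n, G.Adj s t → ¬ (π s < π r ∧ π r < π t)

/-- The set of vertices of the subtree rooted at `u` when `G` is rooted at `r`. -/
noncomputable def subtreeFinset {n : ℕ} (G : SimpleGraph (Fin n)) (r u : Fin n) : Finset (Fin n) :=
  univ.filter (fun v => G.dist r v = G.dist r u + G.dist u v)

/-- Directional size `s_r(u)`: size of the subtree rooted at `u` when `G` is rooted at `r`. -/
noncomputable def subtreeSize {n : ℕ} (G : SimpleGraph (Fin n)) (r u : Fin n) : ℕ :=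
  (subtreeFinset G r u).card

/-- Out-degree (number of children) of `u` in `G` rooted at `r`. -/
noncomputable def outDeg {n : ℕ} (G : SimpleGraph (Fin n)) (r u : Fin n) : ℕ :=
  (univ.filter (fun v => G.Adj u v ∧ G.dist r v = G.dist r u + 1)).card

/-- The sum of edge lengths of `G` in the arrangement `π`. -/
noncomputable def Dsum {n : ℕ} (G : SimpleGraph (Fin n)) (π : Equiv.Perm (Fin n)) : ℤ :=
  ∑ e ∈ G.edgeFinset,
    Sym2.lift ⟨fun u v => |((π u : ℕ) : ℤ) - ((π v : ℕ) : ℤ)|,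
      fun u v => abs_sub_comm _ _⟩ e

/-- The set of planar arrangements of `G`. -/
noncomputable def planarSet {n : ℕ} (G : SimpleGraph (Fin n)) : Finset (Equiv.Perm (Fin n)) :=
  univ.filter (IsPlanarArr G)

/-- The set of projective arrangements of `G` rooted at `r`. -/
noncomputable def projSet {n : ℕ} (G : SimpleGraph (Fin n)) (r : Fin n) :
    Finset (Equiv.Perm (Fin n)) :=
  univ.filter (IsProjectiveArr G r)

/-- The set of projective arrangements of `G` rooted at `r` with `r` in the first position. -/
noncomputable def projSet1 {n : ℕ} (G : SimpleGraph (Fin n)) (r : Fin n) :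
    Finset (Equiv.Perm (Fin n)) :=
  univ.filter (fun π => IsProjectiveArr G r π ∧ (π r : ℕ) = 0)

section Helpers
variable {n : ℕ} {G : SimpleGraph (Fin n)} {π : Equiv.Perm (Fin n)}
open Fin.NatCast

lemma mem_of_walk {S : Set (Fin n)} (hcl : ∀ v ∈ S, ∀ u, G.Adj v u → u ∈ S) :
    ∀ {a b : Fin n}, G.Walk a b → a ∈ S → b ∈ S := by
  intro a b w
  induction w with
  | nil => exact id
  | @cons u v w h p ih => intro hu; exact ih (hcl u hu v h)

lemma planar_rot_one [NeZero n] (hπ : IsPlanarArr G π) :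
    IsPlanarArr G (π.trans (Equiv.addRight (1 : Fin n))) := by
  obtain ⟨m, rfl⟩ : ∃ m, n = m + 1 := ⟨n - 1, (Nat.succ_pred_eq_of_pos (Nat.pos_of_ne_zero (NeZero.ne n))).symm⟩
  intro s t u v hst huv ⟨h1, h2, h3⟩
  simp only [Equiv.trans_apply, Equiv.coe_addRight] at h1 h2 h3
  rw [Fin.lt_def] at h1 h2 h3
  have key0 : ∀ x : Fin (m+1), x = Fin.last m → ((x+1 : Fin (m+1)) : ℕ) = 0 := fun x hx => by
    rw [Fin.val_add_one, if_pos hx]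
  have key : ∀ x : Fin (m+1), x ≠ Fin.last m → ((x+1 : Fin (m+1)) : ℕ) = (x : ℕ) + 1 := fun x hx => by
    rw [Fin.val_add_one, if_neg hx]
  have hu : π u ≠ Fin.last m := fun h => by
    rw [key0 _ h] at h1; exact Nat.not_lt_zero _ h1
  have ht : π t ≠ Fin.last m := fun h => by
    rw [key0 _ h] at h2; exact Nat.not_lt_zero _ h2
  have hv : π v ≠ Fin.last m := fun h => by
    rw [key0 _ h] at h3; exact Nat.not_lt_zero _ h3
  have eu := key _ hu
  have et := key _ ht
  have ev := key _ hv
  by_cases hs : π s = Fin.last m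
  · have es : (π s + 1).val = 0 := by rw [Fin.val_add_one, if_pos hs]
    have hvs : (π v).val < (π s).val := by
      have : (π v).val < m := by
        rcases Fin.lt_last_iff_ne_last.mpr hv with h
        simpa [Fin.lt_def] using h
      simp [hs]; omega
    exact hπ u v t s huv hst.symm ⟨Fin.lt_def.mpr (by omega), Fin.lt_def.mpr (by omega),
      Fin.lt_def.mpr hvs⟩
  · have es : (π s + 1).val = (π s).val + 1 := by rw [Fin.val_add_one, if_neg hs]
    exact hπ s t u v hst huv ⟨Fin.lt_def.mpr (by omega), Fin.lt_def.mpr (by omega),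
      Fin.lt_def.mpr (by omega)⟩

lemma planar_rot_nat [NeZero n] (hπ : IsPlanarArr G π) (j : ℕ) :
    IsPlanarArr G (π.trans (Equiv.addRight (j : Fin n))) := by
  induction j with
  | zero => convert hπ using 2; ext x; simp
  | succ k ih =>
      have : (π.trans (Equiv.addRight ((k+1 : ℕ) : Fin n)))
          = (π.trans (Equiv.addRight ((k : ℕ) : Fin n))).trans (Equiv.addRight (1 : Fin n)) := by
        ext x
        simp [add_assoc]
      rw [this]
      exact planar_rot_one ih

lemma planar_rot [NeZero n] (hπ : IsPlanarArr G π) (c : Fin n) :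
    IsPlanarArr G (π.trans (Equiv.addRight c)) := by
  have := planar_rot_nat hπ (c : ℕ)
  rwa [Fin.cast_val_eq_self] at this

lemma planar_rot_iff [NeZero n] (c : Fin n) :
    IsPlanarArr G (π.trans (Equiv.addRight c)) ↔ IsPlanarArr G π := by
  constructor
  · intro h
    have := planar_rot h (-c)
    have e : (π.trans (Equiv.addRight c)).trans (Equiv.addRight (-c)) = π := by
      ext x; simp
    rwa [e] at this
  · exact fun h => planar_rot h c
end Helpers

section L1
variable {n : ℕ} {G : SimpleGraph (Fin n)} {r : Fin n}

lemma planar_fiber0 [NeZero n] :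
    (planarSet G).filter (fun π => π r = 0) = projSet1 G r := by
  ext π
  simp only [planarSet, projSet1, Finset.mem_filter, Finset.mem_univ, true_and]
  simp only [IsProjectiveArr]
  constructor
  · rintro ⟨hp, h0⟩
    refine ⟨⟨hp, ?_⟩, by rw [h0]; rfl⟩
    rintro s t _ ⟨h1, _⟩
    rw [h0] at h1
    rw [Fin.lt_def] at h1; simp at h1
  · rintro ⟨⟨hp, _⟩, h0⟩
    exact ⟨hp, Fin.ext h0⟩

lemma planarSet_card_eq [NeZero n] :
    (planarSet G).card = n * (projSet1 G r).card := by
  have hmap : ∀ π ∈ planarSet G, π r ∈ (Finset.univ : Finset (Fin n)) := fun _ _ =>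
    Finset.mem_univ _
  rw [Finset.card_eq_sum_card_fiberwise hmap]
  have hfib : ∀ j : Fin n,
      ((planarSet G).filter (fun π => π r = j)).card = (projSet1 G r).card := by
    intro j
    rw [← planar_fiber0 (r := r)]
    apply Finset.card_bij (fun π _ => π.trans (Equiv.addRight (-j)))
    · intro π hπ
      simp only [Finset.mem_filter] at hπ ⊢
      rcases hπ with ⟨hπ, hj⟩
      simp only [planarSet, Finset.mem_filter, Finset.mem_univ, true_and] at hπ ⊢
      refine ⟨planar_rot hπ _, ?_⟩
      simp [hj]
    · intro a _ b _ hab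
      ext x
      have h := DFunLike.congr_fun hab x
      simp only [Equiv.trans_apply, Equiv.coe_addRight] at h
      have h2 := congrArg (· + j) h
      exact congrArg Fin.val (by simpa using h2)
    · intro σ hσ
      refine ⟨σ.trans (Equiv.addRight j), ?_, ?_⟩
      · simp only [Finset.mem_filter] at hσ ⊢
        rcases hσ with ⟨hσ, h0⟩
        simp only [planarSet, Finset.mem_filter, Finset.mem_univ, true_and] at hσ ⊢
        refine ⟨planar_rot hσ _, ?_⟩
        simp [h0]
      · ext x
        simp [add_assoc]
  rw [Finset.sum_congr rfl (fun j _ => hfib j)]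
  simp [Finset.card_univ, mul_comm]

end L1
section Crux

open SimpleGraph

variable {n : ℕ} {G : SimpleGraph (Fin n)} {r : Fin n} {σ : Equiv.Perm (Fin n)}

/-- No edge avoiding `r` spans the gap between positions `k` and `k+1`. -/
def ValidGap {n : ℕ} (G : SimpleGraph (Fin n)) (r : Fin n) (σ : Equiv.Perm (Fin n))
    (k : Fin n) : Prop :=
  ∀ s t : Fin n, G.Adj s t → s ≠ r → ¬((σ s : ℕ) ≤ (k : ℕ) ∧ (k : ℕ) < (σ t : ℕ))

noncomputable def gapPhi {n : ℕ} (G : SimpleGraph (Fin n)) (r : Fin n) (σ : Equiv.Perm (Fin n))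
    (k : Fin n) : Fin n :=
  if h : (((G.neighborFinset r).filter (fun c => (k : ℕ) < (σ c : ℕ))).image σ).Nonempty
  then σ.symm ((((G.neighborFinset r).filter (fun c => (k : ℕ) < (σ c : ℕ))).image σ).min' h)
  else r

lemma sigma_ne_zero (hr : (σ r : ℕ) = 0) {v : Fin n} (hv : v ≠ r) : (σ v : ℕ) ≠ 0 := by
  intro h
  exact hv (σ.injective (Fin.ext (by rw [h, hr])))

lemma nonempty_S_of_valid (hc : G.Preconnected) (hr : (σ r : ℕ) = 0) {k : Fin n}
    (hk : ValidGap G r σ k) (hlt : (k : ℕ) < n - 1) :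
    ((G.neighborFinset r).filter (fun c => (k : ℕ) < (σ c : ℕ))).Nonempty := by
  by_contra hS
  rw [Finset.not_nonempty_iff_eq_empty] at hS
  set T : Set (Fin n) := {v | (σ v : ℕ) ≤ (k : ℕ)} with hT
  have hrT : r ∈ T := by
    simp only [hT, Set.mem_setOf_eq, hr]
    exact Nat.zero_le _
  have hcl : ∀ v ∈ T, ∀ u, G.Adj v u → u ∈ T := by
    intro v hv u hadj
    by_contra hu
    simp only [hT, Set.mem_setOf_eq, not_le] at hv hu
    by_cases hvr : v = r
    · have : u ∈ (G.neighborFinset r).filter (fun c => (k : ℕ) < (σ c : ℕ)) := by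
        rw [Finset.mem_filter, SimpleGraph.mem_neighborFinset]
        exact ⟨hvr ▸ hadj, hu⟩
      rw [hS] at this
      exact absurd this (Finset.notMem_empty u)
    · exact hk v u hadj hvr ⟨hv, hu⟩
  have hn : (k : ℕ) + 1 < n := by omega
  have hwT : σ.symm ⟨(k : ℕ) + 1, hn⟩ ∉ T := by
    intro hmem
    simp only [hT, Set.mem_setOf_eq, Equiv.apply_symm_apply] at hmem
    omega
  obtain ⟨wlk⟩ := hc r (σ.symm ⟨(k : ℕ) + 1, hn⟩)
  exact hwT (mem_of_walk hcl wlk hrT)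

lemma sset_W {W : Fin n → Prop} {w0 : Fin n} (hw0 : W w0) {v : Fin n}
    (h : Relation.ReflTransGen (fun a b => G.Adj a b ∧ W a ∧ W b) w0 v) : W v := by
  induction h with
  | refl => exact hw0
  | tail _ hstep _ => exact hstep.2.2

lemma rtg_walk {W : Fin n → Prop} {w0 v : Fin n}
    (h : Relation.ReflTransGen (fun a b => G.Adj a b ∧ W a ∧ W b) w0 v) :
    ∃ w : G.Walk w0 v, ∀ x ∈ w.support, W x ∨ x = w0 := by
  induction h with
  | refl => exact ⟨SimpleGraph.Walk.nil, by simp⟩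
  | tail _ hstep ih =>
      obtain ⟨w, hws⟩ := ih
      refine ⟨w.concat hstep.1, ?_⟩
      intro x hx
      rw [SimpleGraph.Walk.support_concat, List.mem_append] at hx
      rcases hx with hx | hx
      · exact hws x hx
      · simp only [List.mem_singleton] at hx
        subst hx
        exact Or.inl hstep.2.2

lemma crux (hT : G.IsTree) (hp : IsPlanarArr G σ) (r : Fin n) (hr : (σ r : ℕ) = 0) :
    (Finset.univ.filter (fun k : Fin n => ValidGap G r σ k)).card = G.degree r + 1 := by
  classical
  have hc : G.Preconnected := hT.isConnected.preconnected
  have hnr : ∀ c ∈ G.neighborFinset r, c ≠ r := by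
    intro c hcmem hcr
    rw [SimpleGraph.mem_neighborFinset] at hcmem
    exact G.loopless.irrefl r (hcr ▸ hcmem)
  rw [show G.degree r + 1 = (insert r (G.neighborFinset r)).card by
    rw [Finset.card_insert_of_notMem (SimpleGraph.notMem_neighborFinset_self G r),
      G.card_neighborFinset_eq_degree]]
  apply Finset.card_bij (fun k _ => gapPhi G r σ k)
  -- maps into target
  · intro k _
    rw [gapPhi]
    split_ifs with h
    · obtain ⟨c, hc', hceq⟩ := Finset.mem_image.mp (Finset.min'_mem _ h)
      rw [← hceq, Equiv.symm_apply_apply]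
      exact Finset.mem_insert_of_mem (Finset.mem_filter.mp hc').1
    · exact Finset.mem_insert_self r _
  -- injective
  · have key : ∀ k1 k2 : Fin n, ValidGap G r σ k1 → ValidGap G r σ k2 → (k1 : ℕ) < (k2 : ℕ) →
        ∀ (h1 : (((G.neighborFinset r).filter (fun c => (k1 : ℕ) < (σ c : ℕ))).image σ).Nonempty)
          (h2 : (((G.neighborFinset r).filter (fun c => (k2 : ℕ) < (σ c : ℕ))).image σ).Nonempty),
        σ.symm ((((G.neighborFinset r).filter (fun c => (k1 : ℕ) < (σ c : ℕ))).image σ).min' h1) =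
        σ.symm ((((G.neighborFinset r).filter (fun c => (k2 : ℕ) < (σ c : ℕ))).image σ).min' h2) →
        False := by
      intro k1 k2 hk1 hk2 hlt h1 h2 heq
      set m1 := (((G.neighborFinset r).filter (fun c => (k1 : ℕ) < (σ c : ℕ))).image σ).min' h1 with hm1
      set m2 := (((G.neighborFinset r).filter (fun c => (k2 : ℕ) < (σ c : ℕ))).image σ).min' h2 with hm2
      have hmm : m1 = m2 := σ.symm.injective heq
      have hm2k : (k2 : ℕ) < (m2 : ℕ) := by
        obtain ⟨c, hc', hceq⟩ := Finset.mem_image.mp (Finset.min'_mem _ h2)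
        rw [hm2, ← hceq]
        exact (Finset.mem_filter.mp hc').2
      set M : Set (Fin n) := {v | (k1 : ℕ) < (σ v : ℕ) ∧ (σ v : ℕ) ≤ (k2 : ℕ)} with hM
      have hrM : r ∉ M := by
        simp only [hM, Set.mem_setOf_eq, hr]
        omega
      have hcl : ∀ v ∈ M, ∀ u, G.Adj v u → u ∈ M := by
        intro v hv u hadj
        simp only [hM, Set.mem_setOf_eq] at hv ⊢
        have hvr : v ≠ r := by
          intro h; rw [h, hr] at hv; omega
        constructor
        · by_contra hu
          push_neg at hu
          by_cases hur : u = r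
          · have hvmem : σ v ∈ ((G.neighborFinset r).filter
                (fun c => (k1 : ℕ) < (σ c : ℕ))).image σ := by
              apply Finset.mem_image_of_mem
              rw [Finset.mem_filter, SimpleGraph.mem_neighborFinset]
              exact ⟨(hur ▸ hadj).symm, hv.1⟩
            have hle := Finset.min'_le _ _ hvmem
            rw [← hm1, hmm] at hle
            have : (m2 : ℕ) ≤ (σ v : ℕ) := hle
            omega
          · exact hk1 u v hadj.symm hur ⟨by omega, hv.1⟩
        · by_contra hu
          push_neg at hu
          exact hk2 v u hadj hvr ⟨hv.2, by omega⟩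
      have hvk : (k1 : ℕ) + 1 < n := by
        have := k2.isLt; omega
      have hv0M : σ.symm ⟨(k1 : ℕ) + 1, hvk⟩ ∈ M := by
        simp only [hM, Set.mem_setOf_eq, Equiv.apply_symm_apply]
        omega
      obtain ⟨wlk⟩ := hc (σ.symm ⟨(k1 : ℕ) + 1, hvk⟩) r
      exact hrM (mem_of_walk hcl wlk hv0M)
    intro k1 hk1 k2 hk2 heq
    rw [Finset.mem_filter] at hk1 hk2
    by_contra hne
    have hne' : (k1 : ℕ) ≠ (k2 : ℕ) := fun h => hne (Fin.ext h)
    rw [gapPhi, gapPhi] at heq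
    by_cases h1 : (((G.neighborFinset r).filter (fun c => (k1 : ℕ) < (σ c : ℕ))).image σ).Nonempty <;>
      by_cases h2 : (((G.neighborFinset r).filter (fun c => (k2 : ℕ) < (σ c : ℕ))).image σ).Nonempty
    · rw [dif_pos h1, dif_pos h2] at heq
      rcases Nat.lt_or_ge (k1 : ℕ) (k2 : ℕ) with h | h
      · exact key k1 k2 hk1.2 hk2.2 h h1 h2 heq
      · exact key k2 k1 hk2.2 hk1.2 (by omega) h2 h1 heq.symm
    · rw [dif_pos h1, dif_neg h2] at heq
      obtain ⟨c, hc', hceq⟩ := Finset.mem_image.mp (Finset.min'_mem _ h1)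
      rw [← hceq, Equiv.symm_apply_apply] at heq
      exact hnr c (Finset.mem_filter.mp hc').1 heq
    · rw [dif_neg h1, dif_pos h2] at heq
      obtain ⟨c, hc', hceq⟩ := Finset.mem_image.mp (Finset.min'_mem _ h2)
      rw [← hceq, Equiv.symm_apply_apply] at heq
      exact hnr c (Finset.mem_filter.mp hc').1 heq.symm
    · have e1 : ¬ ((k1 : ℕ) < n - 1) := fun h =>
        h1 ((nonempty_S_of_valid hc hr hk1.2 h).image σ)
      have e2 : ¬ ((k2 : ℕ) < n - 1) := fun h =>
        h2 ((nonempty_S_of_valid hc hr hk2.2 h).image σ)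
      have := k1.isLt
      have := k2.isLt
      omega
  -- surjective
  · intro b hb
    have hn : 0 < n := Fin.pos r
    rcases Finset.mem_insert.mp hb with rfl | hbN
    · refine ⟨⟨n - 1, by omega⟩, ?_, ?_⟩
      · rw [Finset.mem_filter]
        refine ⟨Finset.mem_univ _, ?_⟩
        rintro s t _ _ ⟨_, hlt⟩
        have := (σ t).isLt
        simp only [Fin.val_mk] at hlt
        omega
      · rw [gapPhi, dif_neg]
        rw [Finset.not_nonempty_iff_eq_empty, Finset.image_eq_empty,
          Finset.filter_eq_empty_iff]
        intro c _
        have := (σ c).isLt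
        simp only [Fin.val_mk, not_lt]
        omega
    · have hadj_rc : G.Adj r b := (SimpleGraph.mem_neighborFinset G r b).mp hbN
      set p := (σ b : ℕ) with hpdef
      have hp1 : 1 ≤ p := by
        have := sigma_ne_zero hr (G.ne_of_adj hadj_rc).symm
        omega
      have hpn : p < n := (σ b).isLt
      set Q := ((G.neighborFinset r).image (fun c' => (σ c' : ℕ))).filter (· < p) with hQ
      have hQne : (insert 0 Q).Nonempty := ⟨0, Finset.mem_insert_self 0 _⟩
      set q0 := (insert 0 Q).max' hQne with hq0def
      have hq0lt : q0 < p := by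
        have hmem := Finset.max'_mem (insert 0 Q) hQne
        rw [← hq0def] at hmem
        rcases Finset.mem_insert.mp hmem with h | h
        · omega
        · exact (Finset.mem_filter.mp h).2
      have hq0max : ∀ c' ∈ G.neighborFinset r, (σ c' : ℕ) < p → (σ c' : ℕ) ≤ q0 := by
        intro c' hc' hlt
        apply Finset.le_max'
        apply Finset.mem_insert_of_mem
        rw [hQ, Finset.mem_filter]
        exact ⟨Finset.mem_image_of_mem _ hc', hlt⟩
      by_cases hq00 : q0 = 0
      · -- no neighbor to the left of b: use k = 0
        have hnoleft : ∀ c' ∈ G.neighborFinset r, p ≤ (σ c' : ℕ) := by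
          intro c' hc'
          by_contra h
          push_neg at h
          have h1 := hq0max c' hc' h
          have h2 := sigma_ne_zero hr (hnr c' hc')
          omega
        refine ⟨⟨0, hn⟩, ?_, ?_⟩
        · rw [Finset.mem_filter]
          refine ⟨Finset.mem_univ _, ?_⟩
          rintro s t _ hs ⟨hle, _⟩
          simp only [Fin.val_mk, Nat.le_zero] at hle
          exact sigma_ne_zero hr hs hle
        · have hcmem : σ b ∈ ((G.neighborFinset r).filter
              (fun c' => ((⟨0, hn⟩ : Fin n) : ℕ) < (σ c' : ℕ))).image σ := by
            apply Finset.mem_image_of_mem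
            rw [Finset.mem_filter]
            exact ⟨hbN, by simp only [Fin.val_mk]; omega⟩
          have hne : (((G.neighborFinset r).filter
              (fun c' => ((⟨0, hn⟩ : Fin n) : ℕ) < (σ c' : ℕ))).image σ).Nonempty := ⟨_, hcmem⟩
          rw [gapPhi, dif_pos hne]
          have hminc : (((G.neighborFinset r).filter
              (fun c' => ((⟨0, hn⟩ : Fin n) : ℕ) < (σ c' : ℕ))).image σ).min' hne = σ b := by
            apply le_antisymm
            · exact Finset.min'_le _ _ hcmem
            · obtain ⟨c', hc', hceq⟩ := Finset.mem_image.mp (Finset.min'_mem _ hne)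
              rw [← hceq, Fin.le_def]
              exact hnoleft c' (Finset.mem_filter.mp hc').1
          rw [hminc, Equiv.symm_apply_apply]
      · -- q0 ≥ 1
        have hq0Q : q0 ∈ Q := by
          have hmem := Finset.max'_mem (insert 0 Q) hQne
          rw [← hq0def] at hmem
          rcases Finset.mem_insert.mp hmem with h | h
          · exact absurd h hq00
          · exact h
        obtain ⟨w0, hw0N, hw0q⟩ := Finset.mem_image.mp (Finset.mem_filter.mp hq0Q).1
        have hadj_rw0 : G.Adj r w0 := (SimpleGraph.mem_neighborFinset G r w0).mp hw0N
        have hq01 : 1 ≤ q0 := by omega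
        set W : Fin n → Prop := fun v => q0 ≤ (σ v : ℕ) ∧ (σ v : ℕ) < p with hW
        have hWw0 : W w0 := ⟨le_of_eq hw0q.symm, by omega⟩
        set Sset : Fin n → Prop :=
          fun v => Relation.ReflTransGen (fun a b' => G.Adj a b' ∧ W a ∧ W b') w0 v with hSset
        set F := Finset.univ.filter (fun v => Sset v) with hF
        have hw0F : w0 ∈ F := by
          rw [hF, Finset.mem_filter]
          exact ⟨Finset.mem_univ _, Relation.ReflTransGen.refl⟩
        have hFne : F.Nonempty := ⟨w0, hw0F⟩
        have hFW : ∀ v ∈ F, W v := by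
          intro v hv
          rw [hF, Finset.mem_filter] at hv
          exact sset_W hWw0 hv.2
        set β0 := ((F.image (fun v => (σ v : ℕ))).max' (hFne.image _)) with hβ0
        have hβmem : β0 ∈ F.image (fun v => (σ v : ℕ)) := by
          rw [hβ0]; exact Finset.max'_mem _ _
        obtain ⟨vβ, hvβF, hvβeq⟩ := Finset.mem_image.mp hβmem
        have hβmax : ∀ v ∈ F, (σ v : ℕ) ≤ β0 := by
          intro v hv
          rw [hβ0]
          exact Finset.le_max' (F.image (fun v => (σ v : ℕ))) _ (Finset.mem_image_of_mem _ hv)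
        have hq0β : q0 ≤ β0 := by
          have := hβmax w0 hw0F
          omega
        have hβp : β0 < p := by
          have := (hFW vβ hvβF).2
          omega
        have hβn : β0 < n := by omega
        refine ⟨⟨β0, hβn⟩, ?_, ?_⟩
        · -- validity
          rw [Finset.mem_filter]
          refine ⟨Finset.mem_univ _, ?_⟩
          rintro s t hadj hs ⟨h1, h2⟩
          simp only [Fin.val_mk] at h1 h2
          have hs0 : 1 ≤ (σ s : ℕ) := Nat.one_le_iff_ne_zero.mpr (sigma_ne_zero hr hs)
          by_cases ha : (σ s : ℕ) < q0
          · exact hp r w0 s t hadj_rw0 hadj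
              ⟨Fin.lt_def.mpr (by omega), Fin.lt_def.mpr (by omega), Fin.lt_def.mpr (by omega)⟩
          · push_neg at ha
            have hWs : W s := ⟨ha, by omega⟩
            by_cases hsS : Sset s
            · rcases lt_trichotomy (σ t : ℕ) p with hb' | hb' | hb'
              · -- t joins the component: contradiction with maximality
                have hWt : W t := ⟨by omega, hb'⟩
                have hSt : Sset t := hsS.tail ⟨hadj, hWs, hWt⟩
                have : (σ t : ℕ) ≤ β0 := hβmax t (by rw [hF, Finset.mem_filter]; exact ⟨Finset.mem_univ _, hSt⟩)
                omega
              · -- t = b : two distinct paths, contradiction with acyclicity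
                have htb : t = b := σ.injective (Fin.ext (by rw [hb']))
                subst htb
                obtain ⟨wlk, hwlk⟩ := rtg_walk hsS
                have hadj_ts : G.Adj t s := hadj.symm
                have hcw0 : t ≠ w0 := by
                  intro h
                  rw [h] at hpdef
                  omega
                have hcr : t ≠ r := (G.ne_of_adj hadj_rc).symm
                have hrw0 : r ≠ w0 := by
                  intro h
                  rw [← h] at hw0q
                  omega
                have hproof : (SimpleGraph.Walk.cons hadj_rc.symm
                    (SimpleGraph.Walk.cons hadj_rw0 SimpleGraph.Walk.nil) : G.Walk t w0).IsPath := by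
                  rw [SimpleGraph.Walk.isPath_def]
                  simp only [SimpleGraph.Walk.support_cons, SimpleGraph.Walk.support_nil]
                  simp [hcr, hcw0, hrw0]
                have hpaths := SimpleGraph.isAcyclic_iff_path_unique.mp hT.IsAcyclic
                  (⟨_, hproof⟩ : G.Path t w0) ((SimpleGraph.Walk.cons hadj_ts wlk.reverse).toPath)
                have hrmem : r ∈ ((⟨_, hproof⟩ : G.Path t w0) : G.Walk t w0).support := by
                  simp [SimpleGraph.Walk.support_cons]
                rw [hpaths] at hrmem
                have hmem' := SimpleGraph.Walk.support_toPath_subset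
                  (SimpleGraph.Walk.cons hadj_ts wlk.reverse) hrmem
                rw [SimpleGraph.Walk.support_cons] at hmem'
                rcases List.mem_cons.mp hmem' with h | h
                · exact hcr h.symm
                · rw [SimpleGraph.Walk.support_reverse, List.mem_reverse] at h
                  rcases hwlk r h with h' | h'
                  · have h2 := h'.1
                    rw [hr] at h2
                    omega
                  · exact hrw0 h'
              · -- crossing with edge (r, b)
                exact hp r b s t hadj_rc hadj
                  ⟨Fin.lt_def.mpr (by omega), Fin.lt_def.mpr (by omega), Fin.lt_def.mpr (by omega)⟩
            · -- s outside the component: crossing pair along the chain to vβ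
              have haq0 : (σ s : ℕ) ≠ q0 := by
                intro h
                apply hsS
                have hsw : s = w0 := σ.injective (Fin.ext (by rw [h, hw0q]))
                rw [hSset, hsw]
              have haβ : (σ s : ℕ) ≠ β0 := by
                intro h
                apply hsS
                have : s = vβ := σ.injective (Fin.ext (by omega))
                rw [hF, Finset.mem_filter] at hvβF
                rw [hSset, this]
                exact hvβF.2
              have pair : ∀ v : Fin n, Sset v → (σ s : ℕ) < (σ v : ℕ) →
                  ∃ x y, G.Adj x y ∧ Sset x ∧ Sset y ∧
                    (σ x : ℕ) < (σ s : ℕ) ∧ (σ s : ℕ) < (σ y : ℕ) := by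
                intro v hv
                rw [hSset] at hv
                induction hv with
                | refl =>
                    intro hgt
                    rw [hw0q] at hgt
                    omega
                | @tail b' v' hpre hstep ih =>
                    intro hgt
                    by_cases hmid : (σ s : ℕ) < (σ b' : ℕ)
                    · exact ih hmid
                    · push_neg at hmid
                      have hneq : (σ b' : ℕ) ≠ (σ s : ℕ) := by
                        intro h
                        exact hsS (by
                          have : b' = s := σ.injective (Fin.ext h)
                          rw [hSset, ← this]
                          exact hpre)
                      exact ⟨b', v', hstep.1, hpre, hpre.tail hstep, by omega, hgt⟩
              have hvβS : Sset vβ := by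
                rw [hF, Finset.mem_filter] at hvβF
                exact hvβF.2
              obtain ⟨x, y, hxy, hxS, hyS, hx, hy⟩ := pair vβ hvβS (by omega)
              have hyβ : (σ y : ℕ) ≤ β0 :=
                hβmax y (by rw [hF, Finset.mem_filter]; exact ⟨Finset.mem_univ _, hyS⟩)
              exact hp x y s t hxy hadj
                ⟨Fin.lt_def.mpr (by omega), Fin.lt_def.mpr (by omega), Fin.lt_def.mpr (by omega)⟩
        · -- value of gapPhi at β0 is b
          have hcmem : σ b ∈ ((G.neighborFinset r).filter
              (fun c' => ((⟨β0, hβn⟩ : Fin n) : ℕ) < (σ c' : ℕ))).image σ := by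
            apply Finset.mem_image_of_mem
            rw [Finset.mem_filter]
            exact ⟨hbN, by simp only [Fin.val_mk]; omega⟩
          have hne : (((G.neighborFinset r).filter
              (fun c' => ((⟨β0, hβn⟩ : Fin n) : ℕ) < (σ c' : ℕ))).image σ).Nonempty := ⟨_, hcmem⟩
          rw [gapPhi, dif_pos hne]
          have hminc : (((G.neighborFinset r).filter
              (fun c' => ((⟨β0, hβn⟩ : Fin n) : ℕ) < (σ c' : ℕ))).image σ).min' hne = σ b := by
            apply le_antisymm
            · exact Finset.min'_le _ _ hcmem
            · obtain ⟨c', hc', hceq⟩ := Finset.mem_image.mp (Finset.min'_mem _ hne)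
              rw [← hceq, Fin.le_def]
              have hc'N := (Finset.mem_filter.mp hc').1
              have hc'gt := (Finset.mem_filter.mp hc').2
              simp only [Fin.val_mk] at hc'gt
              by_contra hlt
              push_neg at hlt
              have := hq0max c' hc'N (by omega)
              omega
          rw [hminc, Equiv.symm_apply_apply]

end Crux
section Surgery

variable {n : ℕ} {G : SimpleGraph (Fin n)} {r : Fin n} {σ π : Equiv.Perm (Fin n)}

lemma cyc_val {m : ℕ} (k j : Fin (m+1)) :
    ((Fin.cycleRange k) j : ℕ) =
      if (j : ℕ) < (k : ℕ) then (j : ℕ) + 1 else if (j : ℕ) = (k : ℕ) then 0 else (j : ℕ) := by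
  rcases lt_trichotomy j k with h | h | h
  · rw [Fin.cycleRange_of_lt h, if_pos (by exact_mod_cast h)]
    exact Fin.val_add_one_of_lt (lt_of_lt_of_le h (Fin.le_last k))
  · have hv : (j : ℕ) = (k : ℕ) := by rw [h]
    rw [h, Fin.cycleRange_self, if_neg (by omega), if_pos (by omega)]
    rfl
  · have hv : (k : ℕ) < (j : ℕ) := by exact_mod_cast h
    rw [Fin.cycleRange_of_gt h, if_neg (by omega), if_neg (by omega)]

lemma cyc_symm_val {m : ℕ} (k j : Fin (m+1)) :
    (((Fin.cycleRange k).symm j) : ℕ) =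
      if (j : ℕ) = 0 then (k : ℕ) else if (j : ℕ) ≤ (k : ℕ) then (j : ℕ) - 1 else (j : ℕ) := by
  have hj : Fin.cycleRange k ((Fin.cycleRange k).symm j) = j :=
    Equiv.apply_symm_apply _ _
  have hv := congrArg Fin.val hj
  rw [cyc_val] at hv
  rcases Nat.lt_trichotomy (((Fin.cycleRange k).symm j) : ℕ) ((k : ℕ)) with h | h | h
  · rw [if_pos h] at hv
    rw [if_neg (by omega), if_pos (by omega)]
    omega
  · rw [if_neg (by omega), if_pos h] at hv
    rw [if_pos (by omega)]
    omega
  · rw [if_neg (by omega), if_neg (by omega)] at hv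
    rw [if_neg (by omega), if_neg (by omega)]
    omega

lemma pine_r [NeZero n] (hr : (σ r : ℕ) = 0) (k : Fin n) :
    (σ.trans (Fin.cycleRange k).symm) r = k := by
  obtain ⟨m, rfl⟩ : ∃ m, n = m + 1 :=
    ⟨n - 1, (Nat.succ_pred_eq_of_pos (Nat.pos_of_ne_zero (NeZero.ne n))).symm⟩
  have h0 : σ r = 0 := Fin.ext (by rw [hr]; rfl)
  simp only [Equiv.trans_apply, h0]
  rw [Equiv.symm_apply_eq, Fin.cycleRange_self]

lemma pine [NeZero n] (hr : (σ r : ℕ) = 0) (k : Fin n) {v : Fin n} (hvr : v ≠ r) :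
    ((σ.trans (Fin.cycleRange k).symm) v : ℕ) =
      if (σ v : ℕ) ≤ (k : ℕ) then (σ v : ℕ) - 1 else (σ v : ℕ) := by
  obtain ⟨m, rfl⟩ : ∃ m, n = m + 1 :=
    ⟨n - 1, (Nat.succ_pred_eq_of_pos (Nat.pos_of_ne_zero (NeZero.ne n))).symm⟩
  have hne := sigma_ne_zero hr hvr
  simp only [Equiv.trans_apply]
  rw [cyc_symm_val, if_neg hne]

lemma pine_fwd [NeZero n] (k : Fin n) (j : Fin n) :
    ((Fin.cycleRange k) j : ℕ) =
      if (j : ℕ) < (k : ℕ) then (j : ℕ) + 1 else if (j : ℕ) = (k : ℕ) then 0 else (j : ℕ) := by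
  obtain ⟨m, rfl⟩ : ∃ m, n = m + 1 :=
    ⟨n - 1, (Nat.succ_pred_eq_of_pos (Nat.pos_of_ne_zero (NeZero.ne n))).symm⟩
  exact cyc_val k j

/-- Inserting `r` back at gap `k` of a planar arrangement with `r` first is projective,
provided no non-root edge spans the gap. -/
lemma insert_proj [NeZero n] (hp : IsPlanarArr G σ) (hr : (σ r : ℕ) = 0)
    (k : Fin n) (hv : ValidGap G r σ k) :
    IsProjectiveArr G r (σ.trans (Fin.cycleRange k).symm) := by
  set π' := σ.trans (Fin.cycleRange k).symm with hπ'
  have hπr : π' r = k := pine_r hr k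
  have hval : ∀ v : Fin n, v ≠ r →
      (π' v : ℕ) = if (σ v : ℕ) ≤ (k : ℕ) then (σ v : ℕ) - 1 else (σ v : ℕ) :=
    fun v hvr => pine hr k hvr
  have hpos : ∀ v : Fin n, v ≠ r → 1 ≤ (σ v : ℕ) := fun v hvr =>
    Nat.one_le_iff_ne_zero.mpr (sigma_ne_zero hr hvr)
  constructor
  · -- planarity
    rintro s t u v hst huv ⟨h1, h2, h3⟩
    rw [Fin.lt_def] at h1 h2 h3
    by_cases hrs : r = s
    · subst hrs
      rw [hπr] at h1
      have hur : u ≠ r := by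
        intro h; rw [h, hπr] at h1; omega
      have htr : t ≠ r := by
        intro h; rw [h, hπr] at h2; omega
      have hvr : v ≠ r := by
        intro h; rw [h, hπr] at h3; omega
      have eu := hval u hur; have et := hval t htr; have ev := hval v hvr
      have pu := hpos u hur; have pt := hpos t htr; have pv := hpos v hvr
      have hσu : (k : ℕ) < (σ u : ℕ) := by
        by_cases h : (σ u : ℕ) ≤ (k : ℕ)
        · rw [if_pos h] at eu; omega
        · omega
      rw [if_neg (by omega)] at eu
      have hσt : (k : ℕ) < (σ t : ℕ) := by
        by_cases h : (σ t : ℕ) ≤ (k : ℕ)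
        · rw [if_pos h] at et; omega
        · omega
      rw [if_neg (by omega)] at et
      have hσv : (k : ℕ) < (σ v : ℕ) := by
        by_cases h : (σ v : ℕ) ≤ (k : ℕ)
        · rw [if_pos h] at ev; omega
        · omega
      rw [if_neg (by omega)] at ev
      exact hp r t u v hst huv
        ⟨Fin.lt_def.mpr (by omega), Fin.lt_def.mpr (by omega), Fin.lt_def.mpr (by omega)⟩
    · have hsr : s ≠ r := fun h => hrs h.symm
      by_cases hrt : r = t
      · subst hrt
        rw [hπr] at h2
        have hur : u ≠ r := by
          intro h; rw [h, hπr] at h2; omega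
        have hvr : v ≠ r := by
          intro h; rw [h, hπr] at h3; omega
        have eu := hval u hur; have ev := hval v hvr
        have pu := hpos u hur; have pv := hpos v hvr
        have hσu : (σ u : ℕ) ≤ (k : ℕ) := by
          by_cases h : (σ u : ℕ) ≤ (k : ℕ)
          · exact h
          · rw [if_neg h] at eu; omega
        have hσv : (k : ℕ) < (σ v : ℕ) := by
          by_cases h : (σ v : ℕ) ≤ (k : ℕ)
          · rw [if_pos h] at ev; omega
          · omega
        exact hv u v huv hur ⟨hσu, hσv⟩
      · have htr : t ≠ r := fun h => hrt h.symm
        by_cases hru : r = u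
        · subst hru
          rw [hπr] at h1 h2
          have es := hval s hsr; have et := hval t htr
          have ps := hpos s hsr; have pt := hpos t htr
          have hσs : (σ s : ℕ) ≤ (k : ℕ) := by
            by_cases h : (σ s : ℕ) ≤ (k : ℕ)
            · exact h
            · rw [if_neg h] at es; omega
          have hσt : (k : ℕ) < (σ t : ℕ) := by
            by_cases h : (σ t : ℕ) ≤ (k : ℕ)
            · rw [if_pos h] at et; omega
            · omega
          exact hv s t hst hsr ⟨hσs, hσt⟩
        · have hur : u ≠ r := fun h => hru h.symm
          by_cases hrv : r = v
          · subst hrv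
            rw [hπr] at h3
            have es := hval s hsr; have et := hval t htr; have eu := hval u hur
            have ps := hpos s hsr; have pt := hpos t htr; have pu := hpos u hur
            have hσt : (σ t : ℕ) ≤ (k : ℕ) := by
              by_cases h : (σ t : ℕ) ≤ (k : ℕ)
              · exact h
              · rw [if_neg h] at et; omega
            have hσu : (σ u : ℕ) ≤ (k : ℕ) := by
              by_cases h : (σ u : ℕ) ≤ (k : ℕ)
              · exact h
              · rw [if_neg h] at eu; omega
            have hσs : (σ s : ℕ) ≤ (k : ℕ) := by
              by_cases h : (σ s : ℕ) ≤ (k : ℕ)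
              · exact h
              · rw [if_neg h] at es; omega
            rw [if_pos hσt] at et; rw [if_pos hσu] at eu; rw [if_pos hσs] at es
            exact hp r u s t huv.symm hst
              ⟨Fin.lt_def.mpr (by omega), Fin.lt_def.mpr (by omega), Fin.lt_def.mpr (by omega)⟩
          · have hvr : v ≠ r := fun h => hrv h.symm
            have es := hval s hsr; have et := hval t htr
            have eu := hval u hur; have ev := hval v hvr
            have ps := hpos s hsr; have pt := hpos t htr
            have pu := hpos u hur; have pv := hpos v hvr
            have hs' : (σ s : ℕ) < (σ u : ℕ) := by
              by_cases h1' : (σ s : ℕ) ≤ (k : ℕ) <;> by_cases h2' : (σ u : ℕ) ≤ (k : ℕ) <;>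
                simp only [if_pos, if_neg, h1', h2', if_true, if_false] at es eu <;> omega
            have hu' : (σ u : ℕ) < (σ t : ℕ) := by
              by_cases h1' : (σ u : ℕ) ≤ (k : ℕ) <;> by_cases h2' : (σ t : ℕ) ≤ (k : ℕ) <;>
                simp only [if_pos, if_neg, h1', h2', if_true, if_false] at eu et <;> omega
            have ht' : (σ t : ℕ) < (σ v : ℕ) := by
              by_cases h1' : (σ t : ℕ) ≤ (k : ℕ) <;> by_cases h2' : (σ v : ℕ) ≤ (k : ℕ) <;>
                simp only [if_pos, if_neg, h1', h2', if_true, if_false] at et ev <;> omega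
            exact hp s t u v hst huv
              ⟨Fin.lt_def.mpr hs', Fin.lt_def.mpr hu', Fin.lt_def.mpr ht'⟩
  · -- no edge covers r
    rintro s t hadj ⟨h1, h2⟩
    rw [Fin.lt_def, hπr] at h1 h2
    have hsr : s ≠ r := by
      intro h; rw [h, hπr] at h1; omega
    have htr : t ≠ r := by
      intro h; rw [h, hπr] at h2; omega
    have es := hval s hsr; have et := hval t htr
    have ps := hpos s hsr; have pt := hpos t htr
    have hσs : (σ s : ℕ) ≤ (k : ℕ) := by
      by_cases h : (σ s : ℕ) ≤ (k : ℕ)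
      · exact h
      · rw [if_neg h] at es; omega
    have hσt : (k : ℕ) < (σ t : ℕ) := by
      by_cases h : (σ t : ℕ) ≤ (k : ℕ)
      · rw [if_pos h] at et; omega
      · omega
    exact hv s t hadj hsr ⟨hσs, hσt⟩

/-- Moving `r` to the front of a projective arrangement yields a planar arrangement. -/
lemma move_front [NeZero n] (hπ : IsProjectiveArr G r π) :
    IsProjectiveArr G r (π.trans (Fin.cycleRange (π r))) ∧
      ((π.trans (Fin.cycleRange (π r))) r : ℕ) = 0 := by
  obtain ⟨m, rfl⟩ : ∃ m, n = m + 1 :=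
    ⟨n - 1, (Nat.succ_pred_eq_of_pos (Nat.pos_of_ne_zero (NeZero.ne n))).symm⟩
  set k := π r with hk
  set σ' := π.trans (Fin.cycleRange k) with hσ'
  have hσr : (σ' r : ℕ) = 0 := by
    have h0 : σ' r = 0 := by
      rw [hσ']
      simp only [Equiv.trans_apply, ← hk]
      exact Fin.cycleRange_self k
    rw [h0]
    simp
  have hval : ∀ v : Fin (m+1), v ≠ r →
      (σ' v : ℕ) = if (π v : ℕ) < (k : ℕ) then (π v : ℕ) + 1 else (π v : ℕ) := by
    intro v hvr
    have hne : (π v : ℕ) ≠ (k : ℕ) := by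
      intro h
      exact hvr (π.injective (Fin.ext (by rw [h, hk])))
    simp only [hσ', Equiv.trans_apply]
    rw [pine_fwd]
    by_cases h : (π v : ℕ) < (k : ℕ)
    · rw [if_pos h, if_pos h]
    · rw [if_neg h, if_neg hne, if_neg h]
  have hplanar : IsPlanarArr G σ' := by
    rintro s t u v hst huv ⟨h1, h2, h3⟩
    rw [Fin.lt_def] at h1 h2 h3
    have hur : u ≠ r := by
      intro h
      rw [h, hσr] at h1
      omega
    have htr : t ≠ r := by
      intro h
      rw [h, hσr] at h2
      have := (σ' u).val.zero_le
      omega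
    have hvr : v ≠ r := by
      intro h
      rw [h, hσr] at h3
      omega
    have eu := hval u hur; have et := hval t htr; have ev := hval v hvr
    -- π-order of u, t, v
    have hut : (π u : ℕ) < (π t : ℕ) := by
      by_cases c1 : (π u : ℕ) < (k : ℕ) <;> by_cases c2 : (π t : ℕ) < (k : ℕ) <;>
        simp only [if_pos, if_neg, c1, c2, if_true, if_false] at eu et <;> omega
    have htv : (π t : ℕ) < (π v : ℕ) := by
      by_cases c1 : (π t : ℕ) < (k : ℕ) <;> by_cases c2 : (π v : ℕ) < (k : ℕ) <;>
        simp only [if_pos, if_neg, c1, c2, if_true, if_false] at et ev <;> omega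
    by_cases hrs : r = s
    · subst hrs
      -- edges (r,t),(u,v), σ'-pattern 0 < σ'u < σ't < σ'v
      rcases Nat.lt_or_ge (π u : ℕ) (k : ℕ) with hc | hc
      · rcases Nat.lt_or_ge (k : ℕ) (π v : ℕ) with hd | hd
        · -- edge (u,v) covers r
          exact hπ.2 u v huv ⟨Fin.lt_def.mpr (by rw [← hk]; omega),
            Fin.lt_def.mpr (by rw [← hk]; omega)⟩
        · -- all of u,t,v left of r
          have hvk : (π v : ℕ) ≠ (k : ℕ) := by
            intro h
            exact hvr (π.injective (Fin.ext (by rw [h, hk])))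
          exact hπ.1 u v t r huv hst.symm ⟨Fin.lt_def.mpr hut, Fin.lt_def.mpr htv,
            Fin.lt_def.mpr (by rw [← hk]; omega)⟩
      · -- r before u: direct crossing
        have huk : (π u : ℕ) ≠ (k : ℕ) := by
          intro h
          exact hur (π.injective (Fin.ext (by rw [h, hk])))
        exact hπ.1 r t u v hst huv ⟨Fin.lt_def.mpr (by rw [← hk]; omega),
          Fin.lt_def.mpr hut, Fin.lt_def.mpr htv⟩
    · have hsr : s ≠ r := fun h => hrs h.symm
      have es := hval s hsr
      have hsu : (π s : ℕ) < (π u : ℕ) := by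
        by_cases c1 : (π s : ℕ) < (k : ℕ) <;> by_cases c2 : (π u : ℕ) < (k : ℕ) <;>
          simp only [if_pos, if_neg, c1, c2, if_true, if_false] at es eu <;> omega
      exact hπ.1 s t u v hst huv ⟨Fin.lt_def.mpr hsu, Fin.lt_def.mpr hut, Fin.lt_def.mpr htv⟩
  refine ⟨⟨hplanar, ?_⟩, hσr⟩
  rintro s t _ ⟨h1, _⟩
  rw [Fin.lt_def, hσr] at h1
  omega

end Surgery
section L2

variable {n : ℕ} {G : SimpleGraph (Fin n)} {r : Fin n}

lemma projSet_card_eq [NeZero n] (hT : G.IsTree) :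
    (projSet G r).card = (G.degree r + 1) * (projSet1 G r).card := by
  classical
  have hmaps : ∀ π ∈ projSet G r, π.trans (Fin.cycleRange (π r)) ∈ projSet1 G r := by
    intro π hπ
    rw [projSet, Finset.mem_filter] at hπ
    obtain ⟨h1, h2⟩ := move_front hπ.2
    rw [projSet1, Finset.mem_filter]
    exact ⟨Finset.mem_univ _, h1, h2⟩
  rw [Finset.card_eq_sum_card_fiberwise hmaps]
  have hfib : ∀ σ ∈ projSet1 G r,
      ((projSet G r).filter (fun π => π.trans (Fin.cycleRange (π r)) = σ)).card
        = G.degree r + 1 := by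
    intro σ hσ
    rw [projSet1, Finset.mem_filter] at hσ
    obtain ⟨-, hproj, hσr⟩ := hσ
    rw [← crux hT hproj.1 r hσr]
    apply Finset.card_bij (fun π _ => π r)
    · intro π hmem
      rw [Finset.mem_filter] at hmem
      obtain ⟨hmemP, hfix⟩ := hmem
      rw [projSet, Finset.mem_filter] at hmemP
      have hπσ : π = σ.trans (Fin.cycleRange (π r)).symm := by
        rw [← hfix]; ext x; simp
      rw [Finset.mem_filter]
      refine ⟨Finset.mem_univ _, ?_⟩
      rintro s t hadj hs ⟨hle, hlt⟩
      have htr : t ≠ r := by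
        intro h
        rw [h, hσr] at hlt
        omega
      have hs1 : 1 ≤ (σ s : ℕ) := Nat.one_le_iff_ne_zero.mpr (sigma_ne_zero hσr hs)
      have hπs : (π s : ℕ) = (σ s : ℕ) - 1 := by
        rw [hπσ, pine hσr (π r) hs, if_pos hle]
      have hπt : (π t : ℕ) = (σ t : ℕ) := by
        rw [hπσ, pine hσr (π r) htr, if_neg (by omega)]
      exact hmemP.2.2 s t hadj
        ⟨Fin.lt_def.mpr (by omega), Fin.lt_def.mpr (by omega)⟩
    · intro a ha b hb hab
      rw [Finset.mem_filter] at ha hb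
      have ha' : a = σ.trans (Fin.cycleRange (a r)).symm := by
        rw [← ha.2]; ext x; simp
      have hb' : b = σ.trans (Fin.cycleRange (b r)).symm := by
        rw [← hb.2]; ext x; simp
      rw [ha', hb', hab]
    · intro k hk
      rw [Finset.mem_filter] at hk
      have hins := insert_proj hproj.1 hσr k hk.2
      refine ⟨σ.trans (Fin.cycleRange k).symm, ?_, pine_r hσr k⟩
      rw [Finset.mem_filter]
      constructor
      · rw [projSet, Finset.mem_filter]
        exact ⟨Finset.mem_univ _, hins⟩
      · rw [pine_r hσr k]
        ext x
        simp
  rw [Finset.sum_congr rfl hfib, Finset.sum_const, smul_eq_mul, mul_comm]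

end L2
section Nonempty

open SimpleGraph

variable {n : ℕ} {G : SimpleGraph (Fin n)} {r : Fin n}

-- generic lex lemmas
lemma lex_prefix_lt {α : Type*} [LinearOrder α] (l : List α) (a : α) (m : List α) :
    l < l ++ a :: m := by
  induction l with
  | nil => exact List.Lex.nil
  | cons h t ih => exact List.Lex.cons ih

lemma lex_ext_lt {α : Type*} [LinearOrder α] {a b : α} (l m m' : List α) (hab : a < b) :
    l ++ a :: m < l ++ b :: m' := by
  induction l with
  | nil => exact List.Lex.rel hab
  | cons h t ih => exact List.Lex.cons ih

lemma lex_between {α : Type*} [LinearOrder α] :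
    ∀ (l x : List α) (a : α), l < x → x < l ++ [a] → ∃ c m, c < a ∧ x = l ++ c :: m := by
  intro l
  induction l with
  | nil =>
      intro x a h1 h2
      cases x with
      | nil => cases h1
      | cons c m =>
          cases h2 with
          | rel hr => exact ⟨c, m, hr, rfl⟩
          | cons hc => cases hc
  | cons h t ih =>
      intro x a h1 h2
      cases x with
      | nil => cases h1
      | cons c m =>
          cases h1 with
          | rel hr =>
              -- h < c, but c :: m < h :: (t ++ [a]) forces c < h or c = h
              exfalso
              cases h2 with
              | rel hr2 => exact absurd hr (lt_asymm hr2)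
              | cons _ => exact lt_irrefl _ hr
          | cons h1' =>
              -- x = h :: m with t < m
              cases h2 with
              | rel hr2 => exact absurd hr2 (lt_irrefl _)
              | cons h2' =>
                  obtain ⟨c', m', hc', rfl⟩ := ih m a h1' h2'
                  exact ⟨c', m', hc', rfl⟩

lemma isPath_concat {u v w : Fin n} {p : G.Walk u v} (hp : p.IsPath) (h : G.Adj v w)
    (hw : w ∉ p.support) : (p.concat h).IsPath := by
  rw [SimpleGraph.Walk.isPath_def, SimpleGraph.Walk.support_concat,
    List.nodup_append]
  refine ⟨hp.support_nodup, List.nodup_singleton _, ?_⟩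
  intro x hx y hx'
  rw [List.mem_singleton] at hx'
  subst hx'
  rintro rfl
  exact hw hx

noncomputable def treeKey (hT : G.IsTree) (r v : Fin n) : List (Fin n) :=
  ((hT.existsUnique_path r v).choose).support

lemma treeKey_unique (hT : G.IsTree) (v : Fin n) {p : G.Walk r v} (hp : p.IsPath) :
    p.support = treeKey hT r v := by
  rw [treeKey]
  exact congrArg SimpleGraph.Walk.support ((hT.existsUnique_path r v).choose_spec.2 p hp)

lemma treeKey_r (hT : G.IsTree) : treeKey hT r r = [r] := by
  have := treeKey_unique (r := r) hT r (p := SimpleGraph.Walk.nil) SimpleGraph.Walk.IsPath.nil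
  rw [SimpleGraph.Walk.support_nil] at this
  exact this.symm

lemma treeKey_head (hT : G.IsTree) (v : Fin n) : ∃ l, treeKey hT r v = r :: l := by
  rw [treeKey]
  exact ⟨_, SimpleGraph.Walk.support_eq_cons _⟩

lemma treeKey_getLast (hT : G.IsTree) (v : Fin n) :
    (treeKey hT r v).getLast? = some v := by
  rw [treeKey, List.getLast?_eq_getLast (SimpleGraph.Walk.support_ne_nil _)]
  rw [SimpleGraph.Walk.getLast_support]

lemma treeKey_inj (hT : G.IsTree) : Function.Injective (treeKey hT r) := by
  intro a b hab
  have ha := treeKey_getLast (r := r) hT a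
  have hb := treeKey_getLast (r := r) hT b
  rw [hab, hb] at ha
  exact (Option.some_injective _ ha).symm

lemma treeKey_adj (hT : G.IsTree) {u v : Fin n} (h : G.Adj u v) :
    treeKey hT r v = treeKey hT r u ++ [v] ∨ treeKey hT r u = treeKey hT r v ++ [u] := by
  classical
  set pu := (hT.existsUnique_path r u).choose with hpu_def
  have hpu : pu.IsPath := (hT.existsUnique_path r u).choose_spec.1
  by_cases hv : v ∈ pu.support
  · right
    set q := pu.takeUntil v hv with hq_def
    have hq : q.IsPath := hpu.takeUntil hv
    have hvu : v ≠ u := (G.ne_of_adj h).symm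
    have hu_not : u ∉ q.support := by
      have hspec := pu.take_spec hv
      have hnd := hpu.support_nodup
      rw [← hspec, SimpleGraph.Walk.support_append] at hnd
      have hdisj := List.disjoint_of_nodup_append hnd
      have hu_tail : u ∈ (pu.dropUntil v hv).support.tail := by
        have hmem := SimpleGraph.Walk.end_mem_support (pu.dropUntil v hv)
        rw [SimpleGraph.Walk.support_eq_cons (pu.dropUntil v hv)] at hmem
        rcases List.mem_cons.mp hmem with h' | h'
        · exact absurd h'.symm hvu
        · exact h'
      exact fun hc => (hdisj hc) hu_tail
    have hpath2 : (q.concat h.symm).IsPath := isPath_concat hq h.symm hu_not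
    have he1 : (q.concat h.symm).support = treeKey hT r u := treeKey_unique hT u hpath2
    have he2 : q.support = treeKey hT r v := treeKey_unique hT v hq
    rw [← he1, SimpleGraph.Walk.support_concat, he2]
  · left
    have hpath2 : (pu.concat h).IsPath := isPath_concat hpu h hv
    have he1 : (pu.concat h).support = treeKey hT r v := treeKey_unique hT v hpath2
    have he2 : pu.support = treeKey hT r u := treeKey_unique hT u hpu
    rw [← he1, SimpleGraph.Walk.support_concat, he2]

lemma projSet1_nonempty [NeZero n] (hT : G.IsTree) : (projSet1 G r).Nonempty := by
  classical
  have hinj : Function.Injective (treeKey hT r) := treeKey_inj hT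
  set K := Finset.univ.image (treeKey hT r) with hK
  have hKcard : K.card = n := by
    rw [hK, Finset.card_image_of_injective _ hinj, Finset.card_univ, Fintype.card_fin]
  set iso := K.orderIsoOfFin hKcard with hiso
  have hmem : ∀ v, treeKey hT r v ∈ K := fun v =>
    Finset.mem_image_of_mem _ (Finset.mem_univ v)
  set f : Fin n → Fin n := fun v => iso.symm ⟨treeKey hT r v, hmem v⟩ with hf
  have hfinj : Function.Injective f := by
    intro a b hab
    rw [hf] at hab
    have := iso.symm.injective hab
    rw [Subtype.mk_eq_mk] at this
    exact hinj this
  have hfbij := Finite.injective_iff_bijective.mp hfinj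
  have hflt : ∀ a b, f a < f b ↔ treeKey hT r a < treeKey hT r b := by
    intro a b
    rw [hf]
    rw [OrderIso.lt_iff_lt, Subtype.mk_lt_mk]
  set σp : Equiv.Perm (Fin n) := Equiv.ofBijective f hfbij with hσp
  have hσval : ∀ v, σp v = f v := fun v => rfl
  have hmin : ∀ v, f r ≤ f v := by
    intro v
    rcases eq_or_ne v r with rfl | hv
    · exact le_refl _
    · apply le_of_lt
      rw [hflt]
      obtain ⟨l, hl⟩ := treeKey_head (r := r) hT v
      have hlne : l ≠ [] := by
        intro h0
        apply hv
        apply hinj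
        rw [hl, h0, treeKey_r hT]
      obtain ⟨a, l', rfl⟩ := List.exists_cons_of_ne_nil hlne
      rw [treeKey_r hT, hl]
      have := lex_prefix_lt [r] a l'
      simpa using this
  have h0 : (σp r : ℕ) = 0 := by
    obtain ⟨w, hw⟩ := hfbij.2 0
    have hle := hmin w
    rw [hw] at hle
    have := Fin.le_def.mp hle
    simpa [hσval] using this
  have hplanar : IsPlanarArr G σp := by
    rintro s t u v hst huv ⟨h1, h2, h3⟩
    rw [hσval, hσval] at h1 h2 h3
    rw [hflt] at h1 h2 h3
    rcases treeKey_adj (r := r) hT hst with hts | hst'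
    · rw [hts] at h2
      obtain ⟨c, m, hca, hu⟩ := lex_between _ _ _ h1 h2
      rcases treeKey_adj (r := r) hT huv with hvu | huv'
      · have hvt : treeKey hT r v < treeKey hT r s ++ [t] := by
          rw [hvu, hu]
          have := lex_ext_lt (treeKey hT r s) (m ++ [v]) ([] : List (Fin n)) hca
          simpa [List.append_assoc] using this
        rw [hts] at h3
        exact lt_asymm hvt h3
      · have hvltu : treeKey hT r v < treeKey hT r u := by
          rw [huv']
          exact lex_prefix_lt _ u []
        rw [← hts] at h2
        exact absurd (h2.trans h3) (asymm hvltu)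
    · have hts' : treeKey hT r t < treeKey hT r s := by
        rw [hst']
        exact lex_prefix_lt _ s []
      exact lt_irrefl _ ((hts'.trans h1).trans h2)
  refine ⟨σp, ?_⟩
  rw [projSet1, Finset.mem_filter]
  refine ⟨Finset.mem_univ _, ⟨hplanar, ?_⟩, h0⟩
  rintro s t _ ⟨hlt, _⟩
  rw [Fin.lt_def, h0] at hlt
  omega

end Nonempty
/-- The ratio of the number of planar arrangements of `T` to the number of projective
arrangements of `T^r` is `n / (deg r + 1)`; hence planar arrangements are at least as
numerous, with equality iff `T` is a star with hub `r`. -/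
theorem planar_proj_ratio (n : ℕ) (G : SimpleGraph (Fin n)) (hT : G.IsTree) (r : Fin n) :
    ((planarSet G).card : ℚ) / ((projSet G r).card : ℚ)
      = (n : ℚ) / ((G.degree r : ℚ) + 1) ∧
    (projSet G r).card ≤ (planarSet G).card ∧
    ((planarSet G).card = (projSet G r).card ↔ G.degree r = n - 1) := by
  classical
  haveI : NeZero n := ⟨by have := Fin.pos r; omega⟩
  have hn : 0 < n := Fin.pos r
  set P1 := (projSet1 G r).card with hP1def
  have hP1 : 0 < P1 := Finset.card_pos.mpr (projSet1_nonempty hT)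
  have hplan : (planarSet G).card = n * P1 := planarSet_card_eq (r := r)
  have hproj : (projSet G r).card = (G.degree r + 1) * P1 := projSet_card_eq hT
  have hdeg : G.degree r + 1 ≤ n := by
    have := SimpleGraph.degree_lt_card_verts (G := G) r
    rw [Fintype.card_fin] at this
    omega
  refine ⟨?_, ?_, ?_⟩
  · rw [hplan, hproj]
    have hP1Q : (P1 : ℚ) ≠ 0 := by
      exact_mod_cast hP1.ne'
    push_cast
    rw [mul_div_mul_right _ _ hP1Q]
  · rw [hplan, hproj]
    exact Nat.mul_le_mul_right _ hdeg
  · rw [hplan, hproj]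
    constructor
    · intro h
      have := Nat.eq_of_mul_eq_mul_right hP1 h
      omega
    · intro h
      have : G.degree r + 1 = n := by omega
      rw [this]
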